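/- If quantum families Ψ_B : M → M ⊗ B and Ψ_{B'} : M → M ⊗ B' each commute with a quantum family Ψ_C : M → M ⊗ C, then the composition Ψ_B ▵ Ψ_{B'} : M → M ⊗ (B ⊗ B') commutes with Ψ_C, where commuting is defined via the tensor flip σ_{B⊗B', C} = (σ_{B,C} ⊗ id) ∘ (id ⊗ σ_{B',C}). -/

import Mathlib

open scoped TensorProduct
open Algebra.TensorProduct

/-- The flip of the last two tensor legs `(M ⊗ X) ⊗ Y ≃ (M ⊗ Y) ⊗ X`,
implementing `id_M ⊗ σ_{X,Y}` up to the canonical associativity identification. -/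
noncomputable def flip23 (M X Y : Type*) [Ring M] [Algebra ℂ M] [Ring X] [Algebra ℂ X]
    [Ring Y] [Algebra ℂ Y] : (M ⊗[ℂ] X) ⊗[ℂ] Y ≃ₐ[ℂ] (M ⊗[ℂ] Y) ⊗[ℂ] X :=
  (Algebra.TensorProduct.assoc ℂ ℂ ℂ M X Y).trans
    ((Algebra.TensorProduct.congr (AlgEquiv.refl (A₁ := M))
        (Algebra.TensorProduct.comm ℂ X Y)).trans
      (Algebra.TensorProduct.assoc ℂ ℂ ℂ M Y X).symm)

section Aux

variable {M N X Y Z : Type*} [Ring M] [Algebra ℂ M] [Ring N] [Algebra ℂ N]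
  [Ring X] [Algebra ℂ X] [Ring Y] [Algebra ℂ Y] [Ring Z] [Algebra ℂ Z]

@[simp] lemma flip23_tmul (m : M) (x : X) (y : Y) :
    flip23 M X Y ((m ⊗ₜ[ℂ] x) ⊗ₜ[ℂ] y) = (m ⊗ₜ[ℂ] y) ⊗ₜ[ℂ] x := by
  simp [flip23]

@[simp] lemma flip23_symm_tmul (m : M) (x : X) (y : Y) :
    (flip23 M X Y).symm ((m ⊗ₜ[ℂ] y) ⊗ₜ[ℂ] x) = (m ⊗ₜ[ℂ] x) ⊗ₜ[ℂ] y := by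
  rw [← flip23_tmul, AlgEquiv.symm_apply_apply]

/-- Naturality of `flip23` in the first tensor leg. -/
lemma flip23_naturality (f : M →ₐ[ℂ] N) :
    (flip23 N X Y).toAlgHom.comp
        (map (map f (AlgHom.id ℂ X)) (AlgHom.id ℂ Y))
      = (map (map f (AlgHom.id ℂ Y)) (AlgHom.id ℂ X)).comp (flip23 M X Y).toAlgHom := by
  ext <;> simp [Algebra.TensorProduct.one_def]

/-- Naturality of the associator in the first tensor leg. -/
lemma assoc_naturality (f : M →ₐ[ℂ] N) :
    (map f (AlgHom.id ℂ (X ⊗[ℂ] Y))).comp (Algebra.TensorProduct.assoc ℂ ℂ ℂ M X Y).toAlgHom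
      = (Algebra.TensorProduct.assoc ℂ ℂ ℂ N X Y).toAlgHom.comp
          (map (map f (AlgHom.id ℂ X)) (AlgHom.id ℂ Y)) := by
  ext <;> simp [Algebra.TensorProduct.one_def]

/-- The structural identity relating the four flips/associators to a single associator. -/
lemma flip23_structural :
    (flip23 M (X ⊗[ℂ] Y) Z).toAlgHom.comp
        ((map (Algebra.TensorProduct.assoc ℂ ℂ ℂ M X Y).toAlgHom (AlgHom.id ℂ Z)).comp
          (((flip23 (M ⊗[ℂ] X) Y Z).symm.toAlgHom).comp
            (map (flip23 M X Z).symm.toAlgHom (AlgHom.id ℂ Y))))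
      = (Algebra.TensorProduct.assoc ℂ ℂ ℂ (M ⊗[ℂ] Z) X Y).toAlgHom := by
  ext <;>
  simp only [AlgEquiv.toAlgHom_eq_coe, AlgHom.comp_apply, AlgHom.coe_restrictScalars',
    AlgHom.coe_coe, AlgEquiv.coe_toAlgHom, includeLeft_apply, includeRight_apply, Algebra.TensorProduct.one_def,
    map_tmul, AlgHom.coe_id, id_eq, flip23_tmul, flip23_symm_tmul, assoc_tmul]

end Aux

set_option maxHeartbeats 1600000 in
/-- If quantum families `Ψ_B` and `Ψ_{B'}` each commute with `Ψ_C`, then their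
composition `Ψ_B ▵ Ψ_{B'}` (labeled by `B ⊗ B'`) commutes with `Ψ_C`. -/
theorem composition_commutes
    {M B B' C : Type*}
    [NormedRing M] [StarRing M] [CStarRing M] [NormedAlgebra ℂ M] [StarModule ℂ M] [CompleteSpace M]
    [NormedRing B] [StarRing B] [CStarRing B] [NormedAlgebra ℂ B] [StarModule ℂ B] [CompleteSpace B]
    [NormedRing B'] [StarRing B'] [CStarRing B'] [NormedAlgebra ℂ B'] [StarModule ℂ B'] [CompleteSpace B']
    [NormedRing C] [StarRing C] [CStarRing C] [NormedAlgebra ℂ C] [StarModule ℂ C] [CompleteSpace C]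
    (ΨB : M →ₐ[ℂ] M ⊗[ℂ] B) (ΨB' : M →ₐ[ℂ] M ⊗[ℂ] B') (ΨC : M →ₐ[ℂ] M ⊗[ℂ] C)
    (hBC : (flip23 M B C).toAlgHom.comp
          ((Algebra.TensorProduct.map ΨB (AlgHom.id ℂ C)).comp ΨC)
        = (Algebra.TensorProduct.map ΨC (AlgHom.id ℂ B)).comp ΨB)
    (hB'C : (flip23 M B' C).toAlgHom.comp
          ((Algebra.TensorProduct.map ΨB' (AlgHom.id ℂ C)).comp ΨC)
        = (Algebra.TensorProduct.map ΨC (AlgHom.id ℂ B')).comp ΨB') :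
    (flip23 M (B ⊗[ℂ] B') C).toAlgHom.comp
        ((Algebra.TensorProduct.map
            ((Algebra.TensorProduct.assoc ℂ ℂ ℂ M B B').toAlgHom.comp
              ((Algebra.TensorProduct.map ΨB (AlgHom.id ℂ B')).comp ΨB'))
            (AlgHom.id ℂ C)).comp ΨC)
      = (Algebra.TensorProduct.map ΨC (AlgHom.id ℂ (B ⊗[ℂ] B'))).comp
          ((Algebra.TensorProduct.assoc ℂ ℂ ℂ M B B').toAlgHom.comp
            ((Algebra.TensorProduct.map ΨB (AlgHom.id ℂ B')).comp ΨB')) := by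
  -- pointwise versions of the hypotheses
  have hBC' : ∀ m : M, map ΨB (AlgHom.id ℂ C) (ΨC m)
      = (flip23 M B C).symm (map ΨC (AlgHom.id ℂ B) (ΨB m)) := by
    intro m
    have := DFunLike.congr_fun hBC m
    simp only [AlgHom.comp_apply, AlgEquiv.toAlgHom_eq_coe, AlgHom.coe_coe, AlgEquiv.coe_toAlgHom] at this
    rw [← this, AlgEquiv.symm_apply_apply]
  have hB'C' : ∀ m : M, map ΨB' (AlgHom.id ℂ C) (ΨC m)
      = (flip23 M B' C).symm (map ΨC (AlgHom.id ℂ B') (ΨB' m)) := by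
    intro m
    have := DFunLike.congr_fun hB'C m
    simp only [AlgHom.comp_apply, AlgEquiv.toAlgHom_eq_coe, AlgHom.coe_coe, AlgEquiv.coe_toAlgHom] at this
    rw [← this, AlgEquiv.symm_apply_apply]
  apply AlgHom.ext
  intro m
  simp only [AlgHom.comp_apply, AlgEquiv.toAlgHom_eq_coe, AlgHom.coe_coe, AlgEquiv.coe_toAlgHom]
  -- decompose the big map on the left
  rw [show map ((Algebra.TensorProduct.assoc ℂ ℂ ℂ M B B').toAlgHom.comp ((map ΨB (AlgHom.id ℂ B')).comp ΨB')) (AlgHom.id ℂ C) = (map (Algebra.TensorProduct.assoc ℂ ℂ ℂ M B B').toAlgHom (AlgHom.id ℂ C)).comp (map ((map ΨB (AlgHom.id ℂ B')).comp ΨB') (AlgHom.id ℂ C)) from Algebra.TensorProduct.ext (AlgHom.ext fun _ => rfl) (AlgHom.ext fun _ => rfl),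
    show map ((map ΨB (AlgHom.id ℂ B')).comp ΨB') (AlgHom.id ℂ C) = (map (map ΨB (AlgHom.id ℂ B')) (AlgHom.id ℂ C)).comp (map ΨB' (AlgHom.id ℂ C)) from Algebra.TensorProduct.ext (AlgHom.ext fun _ => rfl) (AlgHom.ext fun _ => rfl)]
  simp only [AlgHom.comp_apply, AlgEquiv.toAlgHom_eq_coe, AlgHom.coe_coe, AlgEquiv.coe_toAlgHom]
  rw [hB'C' m]
  -- naturality of flip23 applied to an element
  have e2 : ∀ z : (M ⊗[ℂ] C) ⊗[ℂ] B',
      map (map ΨB (AlgHom.id ℂ B')) (AlgHom.id ℂ C) ((flip23 M B' C).symm z)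
        = (flip23 (M ⊗[ℂ] B) B' C).symm (map (map ΨB (AlgHom.id ℂ C)) (AlgHom.id ℂ B') z) := by
    intro z
    have := DFunLike.congr_fun (flip23_naturality (X := B') (Y := C) ΨB)
      ((flip23 M B' C).symm z)
    simp only [AlgHom.comp_apply, AlgEquiv.toAlgHom_eq_coe, AlgHom.coe_coe, AlgEquiv.coe_toAlgHom,
      AlgEquiv.apply_symm_apply] at this
    rw [← this, AlgEquiv.symm_apply_apply]
  rw [e2]
  -- use hBC inside the second leg
  have e3 : map (map ΨB (AlgHom.id ℂ C)) (AlgHom.id ℂ B') (map ΨC (AlgHom.id ℂ B') (ΨB' m))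
      = map (flip23 M B C).symm.toAlgHom (AlgHom.id ℂ B')
          (map (map ΨC (AlgHom.id ℂ B)) (AlgHom.id ℂ B')
            (map ΨB (AlgHom.id ℂ B') (ΨB' m))) := by
    have c1 := DFunLike.congr_fun
      (Algebra.TensorProduct.map_comp (S := ℂ)
        (map ΨB (AlgHom.id ℂ C)) ΨC (AlgHom.id ℂ B') (AlgHom.id ℂ B')) (ΨB' m)
    have c2 := DFunLike.congr_fun
      (Algebra.TensorProduct.map_comp (S := ℂ)
        (flip23 M B C).symm.toAlgHom ((map ΨC (AlgHom.id ℂ B)).comp ΨB) (AlgHom.id ℂ B') (AlgHom.id ℂ B')) (ΨB' m)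
    have c3 := DFunLike.congr_fun
      (Algebra.TensorProduct.map_comp (S := ℂ)
        (map ΨC (AlgHom.id ℂ B)) ΨB (AlgHom.id ℂ B') (AlgHom.id ℂ B')) (ΨB' m)
    simp only [AlgHom.comp_apply, AlgEquiv.toAlgHom_eq_coe, AlgHom.coe_coe, AlgEquiv.coe_toAlgHom, AlgHom.comp_id] at c1 c2 c3
    have key : (map ΨB (AlgHom.id ℂ C)).comp ΨC
        = ((flip23 M B C).symm.toAlgHom).comp ((map ΨC (AlgHom.id ℂ B)).comp ΨB) := by
      apply AlgHom.ext
      intro x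
      simp only [AlgHom.comp_apply, AlgEquiv.toAlgHom_eq_coe, AlgHom.coe_coe, AlgEquiv.coe_toAlgHom]
      rw [hBC' x]
    rw [← c1, key]
    exact c2.trans (congrArg (fun z => map (flip23 M B C).symm.toAlgHom (AlgHom.id ℂ B') z) c3)
  rw [e3]
  -- structural identity collapses the left side to a single associator
  have e4 := DFunLike.congr_fun (flip23_structural (M := M) (X := B) (Y := B') (Z := C))
    (map (map ΨC (AlgHom.id ℂ B)) (AlgHom.id ℂ B') (map ΨB (AlgHom.id ℂ B') (ΨB' m)))
  simp only [AlgHom.comp_apply, AlgEquiv.toAlgHom_eq_coe, AlgHom.coe_coe, AlgEquiv.coe_toAlgHom] at e4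
  -- naturality of the associator handles the right side
  have e5 := DFunLike.congr_fun (assoc_naturality (X := B) (Y := B') ΨC)
    (map ΨB (AlgHom.id ℂ B') (ΨB' m))
  simp only [AlgHom.comp_apply, AlgEquiv.toAlgHom_eq_coe, AlgHom.coe_coe, AlgEquiv.coe_toAlgHom] at e5
  exact e4.trans e5.symm
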